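/- Let F = Σ_{k,ℓ,m ≥ 0} [(ℓ+1)/(k+ℓ+1)] * C(k+ℓ+m, k+ℓ) * C(2k+ℓ+m, k+ℓ+m) * x^k y^ℓ z^m be a formal power series in ℚ[[x,y,z]]. Then ∂F/∂y = F². -/

import Mathlib

open Finset
open PowerSeries
open scoped Nat

noncomputable def Bb (k j : ℕ) : ℚ := ((j:ℚ)+1)/((k:ℚ)+j+1) * (Nat.choose (2*k+j) k)

lemma Bb_zero (j : ℕ) : Bb 0 j = 1 := by
  have : ((j:ℚ)+1) ≠ 0 := by positivity
  simp [Bb, this]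

lemma Bb_rec (k j : ℕ) : Bb (k+1) (j+1) = Bb (k+1) j + Bb k (j+2) := by
  have h1 : ((2*(k+1)+(j+1)).choose (k+1) : ℚ)
      = ((2*k+j+3)*(2*k+j+2)!) / (((k+1)*k !) * ((k+j+2)!)) := by
    rw [show 2*(k+1)+(j+1) = 2*k+j+3 from by ring, Nat.cast_choose ℚ (by omega),
      show (2*k+j+3) - (k+1) = k+j+2 from by omega,
      show (2*k+j+3)! = (2*k+j+3)*(2*k+j+2)! from Nat.factorial_succ _,
      show (k+1)! = (k+1)*(k !) from Nat.factorial_succ _]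
    push_cast; ring
  have h2 : ((2*(k+1)+j).choose (k+1) : ℚ)
      = ((2*k+j+2)!) / (((k+1)*k !) * ((k+j+1)!)) := by
    rw [show 2*(k+1)+j = 2*k+j+2 from by ring, Nat.cast_choose ℚ (by omega),
      show (2*k+j+2) - (k+1) = k+j+1 from by omega,
      show (k+1)! = (k+1)*(k !) from Nat.factorial_succ _]
    push_cast; ring
  have h3 : ((2*k+(j+2)).choose k : ℚ)
      = ((2*k+j+2)!) / ((k !) * ((k+j+2)!)) := by
    rw [show 2*k+(j+2) = 2*k+j+2 from by ring, Nat.cast_choose ℚ (by omega),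
      show (2*k+j+2) - k = k+j+2 from by omega]
  have hf1 : ((2*k+j+2)! : ℚ) ≠ 0 := by positivity
  have hf2 : ((k !) : ℚ) ≠ 0 := by positivity
  have hf3 : ((k+j+1)! : ℚ) ≠ 0 := by positivity
  have hf4 : ((k+j+2)! : ℚ) ≠ 0 := by positivity
  have e4 : ((k+j+2)! : ℚ) = (k+j+2) * ((k+j+1)!) := by
    rw [show (k+j+2)! = (k+j+2)*(k+j+1)! from Nat.factorial_succ _]; push_cast; ring
  rw [Bb, Bb, Bb, h1, h2, h3, e4]
  have hk1 : ((k:ℚ)+1+(j+1)+1) ≠ 0 := by positivity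
  have hk2 : ((k:ℚ)+1+j+1) ≠ 0 := by positivity
  have hk3 : ((k:ℚ)+(j+2)+1) ≠ 0 := by positivity
  push_cast
  field_simp
  ring

noncomputable def catS : ℚ⟦X⟧ := PowerSeries.mk fun n => (catalan n : ℚ)

lemma catS_eq : catS = 1 + X * catS^2 := by
  ext n
  cases n with
  | zero => simp [catS]
  | succ n =>
    rw [map_add, PowerSeries.coeff_succ_X_mul, pow_two, PowerSeries.coeff_mul]
    simp only [catS, PowerSeries.coeff_mk, PowerSeries.coeff_one, Nat.succ_ne_zero, if_false,
      zero_add, catalan_succ' n]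
    push_cast
    rfl

lemma catalan_cast (n : ℕ) : (catalan n : ℚ) = Bb n 0 := by
  rw [Bb, catalan_eq_centralBinom_div,
    Nat.cast_div (Nat.succ_dvd_centralBinom _) (by positivity),
    Nat.centralBinom, show 2*n+0 = 2*n from rfl]
  push_cast
  ring

lemma coeff_catS_pow (k : ℕ) : ∀ j, PowerSeries.coeff k (catS ^ (j+1)) = Bb k j := by
  induction k using Nat.strong_induction_on with
  | _ k ih =>
    intro j
    cases k with
    | zero =>
      rw [Bb_zero]
      simp only [PowerSeries.coeff_zero_eq_constantCoeff, map_pow]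
      have : PowerSeries.constantCoeff catS = 1 := by simp [catS]
      rw [this, one_pow]
    | succ k =>
      induction j with
      | zero =>
        rw [pow_one]
        simp only [catS, PowerSeries.coeff_mk]
        rw [catalan_cast]
      | succ j ihj =>
        have key : catS ^ (j+1+1) = catS ^ (j+1) + X * catS ^ (j+2+1) := by
          calc catS ^ (j+1+1) = catS ^ (j+1) * catS := by ring
          _ = catS ^ (j+1) * (1 + X * catS^2) := by rw [← catS_eq]
          _ = catS ^ (j+1) + X * catS ^ (j+2+1) := by ring
        rw [key, map_add, PowerSeries.coeff_succ_X_mul, ihj, ih k (by omega) (j+2), Bb_rec]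

lemma Bb_conv (i j k : ℕ) :
    ∑ p ∈ antidiagonal k, Bb p.1 i * Bb p.2 j = Bb k (i+j+1) := by
  have h : PowerSeries.coeff k (catS ^ (i+1) * catS ^ (j+1)) =
      PowerSeries.coeff k (catS ^ (i+j+1+1)) := by
    rw [← pow_add]; ring_nf
  rw [PowerSeries.coeff_mul] at h
  simp only [coeff_catS_pow] at h
  exact h

lemma vander (a b m : ℕ) :
    ∑ p ∈ antidiagonal m, ((a+p.1).choose a : ℚ) * ((b+p.2).choose b) =
      ((a+b+1+m).choose (a+b+1) : ℚ) := by
  have h : ((PowerSeries.invOneSubPow ℚ (a+1)).val * (PowerSeries.invOneSubPow ℚ (b+1)).val)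
      = (PowerSeries.invOneSubPow ℚ (a+b+1+1)).val := by
    rw [← Units.val_mul]
    congr 1
    rw [PowerSeries.invOneSubPow_eq_inv_one_sub_pow, PowerSeries.invOneSubPow_eq_inv_one_sub_pow,
      PowerSeries.invOneSubPow_eq_inv_one_sub_pow, ← pow_add]
    congr 1
    omega
  have h2 := congrArg (PowerSeries.coeff m) h
  rw [PowerSeries.coeff_mul] at h2
  simp only [PowerSeries.invOneSubPow_val_succ_eq_mk_add_choose, PowerSeries.coeff_mk] at h2
  rw [show a+b+1+m = (a+b+1)+m from by ring] at *
  exact h2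

/-- The coefficient of `x^k y^ℓ z^m` in the type `A` F-triangle generating series `F`. -/
noncomputable def Fcoeff (k ℓ m : ℕ) : ℚ :=
  ((ℓ + 1 : ℚ) / (k + ℓ + 1)) * (Nat.choose (k + ℓ + m) (k + ℓ)) *
    (Nat.choose (2 * k + ℓ + m) (k + ℓ + m))

/-- `F` as a formal power series in `ℚ[[x,y,z]]` (variables indexed by `Fin 3`). -/
noncomputable def FseriesA : MvPowerSeries (Fin 3) ℚ :=
  fun d => Fcoeff (d 0) (d 1) (d 2)

lemma Fcoeff_eq (k ℓ m : ℕ) :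
    Fcoeff k ℓ m = Bb k ℓ * (((2*k+ℓ)+m).choose (2*k+ℓ) : ℚ) := by
  rw [Fcoeff, Bb]
  rw [Nat.cast_choose ℚ (show k+ℓ ≤ k+ℓ+m by omega),
    Nat.cast_choose ℚ (show k+ℓ+m ≤ 2*k+ℓ+m by omega),
    Nat.cast_choose ℚ (show k ≤ 2*k+ℓ by omega),
    Nat.cast_choose ℚ (show 2*k+ℓ ≤ 2*k+ℓ+m by omega),
    show (k+ℓ+m)-(k+ℓ) = m from by omega,
    show (2*k+ℓ+m)-(k+ℓ+m) = k from by omega,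
    show (2*k+ℓ)-k = k+ℓ from by omega,
    show (2*k+ℓ+m)-(2*k+ℓ) = m from by omega]
  have h1 : ((k+ℓ)! : ℚ) ≠ 0 := by positivity
  have h2 : ((m)! : ℚ) ≠ 0 := by positivity
  have h3 : ((k+ℓ+m)! : ℚ) ≠ 0 := by positivity
  have h4 : ((k)! : ℚ) ≠ 0 := by positivity
  have h5 : (((2*k+ℓ))! : ℚ) ≠ 0 := by positivity
  field_simp

lemma key_sum (k ℓ m : ℕ) :
    ∑ p ∈ antidiagonal k, ∑ q ∈ antidiagonal ℓ, ∑ r ∈ antidiagonal m,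
      Fcoeff p.1 q.1 r.1 * Fcoeff p.2 q.2 r.2 = ((ℓ:ℚ)+1) * Fcoeff k (ℓ+1) m := by
  have step1 : ∀ p ∈ antidiagonal k, ∀ q ∈ antidiagonal ℓ,
      ∑ r ∈ antidiagonal m, Fcoeff p.1 q.1 r.1 * Fcoeff p.2 q.2 r.2
        = Bb p.1 q.1 * Bb p.2 q.2 * (((2*k+ℓ+1)+m).choose (2*k+ℓ+1) : ℚ) := by
    intro p hp q hq
    rw [Finset.HasAntidiagonal.mem_antidiagonal] at hp hq
    have : ∀ r ∈ antidiagonal m, Fcoeff p.1 q.1 r.1 * Fcoeff p.2 q.2 r.2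
        = (Bb p.1 q.1 * Bb p.2 q.2) *
          ((((2*p.1+q.1)+r.1).choose (2*p.1+q.1) : ℚ) * (((2*p.2+q.2)+r.2).choose (2*p.2+q.2))) := by
      intro r _
      rw [Fcoeff_eq, Fcoeff_eq]; ring
    rw [Finset.sum_congr rfl this, ← Finset.mul_sum, vander,
      show 2*p.1+q.1+(2*p.2+q.2)+1 = 2*k+ℓ+1 from by omega]
  rw [Finset.sum_congr rfl (fun p hp => Finset.sum_congr rfl (step1 p hp))]
  have step2 : ∀ q ∈ antidiagonal ℓ,
      ∑ p ∈ antidiagonal k, Bb p.1 q.1 * Bb p.2 q.2 * (((2*k+ℓ+1)+m).choose (2*k+ℓ+1) : ℚ)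
        = Bb k (ℓ+1) * (((2*k+ℓ+1)+m).choose (2*k+ℓ+1) : ℚ) := by
    intro q hq
    rw [Finset.HasAntidiagonal.mem_antidiagonal] at hq
    rw [← Finset.sum_mul, Bb_conv, show q.1+q.2+1 = ℓ+1 from by omega]
  rw [Finset.sum_comm, Finset.sum_congr rfl step2, Finset.sum_const, Nat.card_antidiagonal,
    nsmul_eq_mul, Fcoeff_eq k (ℓ+1) m, show 2*k+(ℓ+1) = 2*k+ℓ+1 from by ring]
  push_cast
  ring

noncomputable def toF (a b c : ℕ) : Fin 3 →₀ ℕ :=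
  Finsupp.single 0 a + Finsupp.single 1 b + Finsupp.single 2 c

@[simp] lemma toF_apply0 (a b c : ℕ) : toF a b c 0 = a := by
  simp [toF, Finsupp.single_apply]
@[simp] lemma toF_apply1 (a b c : ℕ) : toF a b c 1 = b := by
  simp [toF, Finsupp.single_apply]
@[simp] lemma toF_apply2 (a b c : ℕ) : toF a b c 2 = c := by
  simp [toF, Finsupp.single_apply]

lemma toF_eta (u : Fin 3 →₀ ℕ) : toF (u 0) (u 1) (u 2) = u := by
  ext i
  fin_cases i <;> simp [toF, Finsupp.single_apply]

/-- `∂F/∂y = F²`, stated coefficientwise for the formal power series `F`. -/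
theorem typeA_PDE (d : Fin 3 →₀ ℕ) :
    ((d 1 : ℚ) + 1) * MvPowerSeries.coeff (d + Finsupp.single 1 1) FseriesA =
      MvPowerSeries.coeff d (FseriesA * FseriesA) := by
  have hF : ∀ u : Fin 3 →₀ ℕ, MvPowerSeries.coeff u FseriesA = Fcoeff (u 0) (u 1) (u 2) :=
    fun u => rfl
  have hL : MvPowerSeries.coeff (d + Finsupp.single 1 1) FseriesA
      = Fcoeff (d 0) (d 1 + 1) (d 2) := by
    rw [hF]
    simp [Finsupp.single_apply]
  rw [hL, MvPowerSeries.coeff_mul, ← key_sum (d 0) (d 1) (d 2),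
    ← Finset.sum_product', ← Finset.sum_product']
  refine Finset.sum_nbij'
    (fun x => (toF x.1.1.1 x.1.2.1 x.2.1, toF x.1.1.2 x.1.2.2 x.2.2))
    (fun p => (((p.1 0, p.2 0), (p.1 1, p.2 1)), (p.1 2, p.2 2)))
    ?_ ?_ ?_ ?_ ?_
  · rintro ⟨⟨⟨a, a'⟩, ⟨b, b'⟩⟩, ⟨c, c'⟩⟩ hx
    simp only [Finset.mem_product, Finset.HasAntidiagonal.mem_antidiagonal] at hx
    rw [Finset.HasAntidiagonal.mem_antidiagonal]
    ext i
    fin_cases i <;> simp <;> omega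
  · rintro ⟨u, v⟩ hp
    rw [Finset.HasAntidiagonal.mem_antidiagonal] at hp
    simp only [Finset.mem_product, Finset.HasAntidiagonal.mem_antidiagonal]
    have h0 := congrArg (fun f : Fin 3 →₀ ℕ => f 0) hp
    have h1 := congrArg (fun f : Fin 3 →₀ ℕ => f 1) hp
    have h2 := congrArg (fun f : Fin 3 →₀ ℕ => f 2) hp
    simp only [Finsupp.add_apply] at h0 h1 h2
    exact ⟨⟨h0, h1⟩, h2⟩
  · rintro ⟨⟨⟨a, a'⟩, ⟨b, b'⟩⟩, ⟨c, c'⟩⟩ _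
    simp
  · rintro ⟨u, v⟩ _
    simp only
    rw [toF_eta, toF_eta]
  · rintro ⟨⟨⟨a, a'⟩, ⟨b, b'⟩⟩, ⟨c, c'⟩⟩ _
    simp [hF]
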